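/- Semi-discrete mass conservation: if the discrete pressure p_h solves ∫ u_h · s_h(u_h, ∇̃_h q_h) + ∫ ∇̃_h p_h · ∇̃_h q_h = 0 for all q_h ∈ V²_h, and u_h evolves by the discrete momentum equation, then d/dt div u_h = 0; hence div u_h(t) = 0 for all t if div u_h(0) = 0. -/

import Mathlib

open RealInnerProductSpace

/-- semi-discrete mass conservation for the conforming FEEC scheme.
If the discrete pressure solves the discrete pressure equation and `u_h` evolves by
the discrete momentum equation, then `d/dt div u_h = 0`; hence `div u_h(t) = 0` for
all `t` if `div u_h(0) = 0`. -/
theorem stmt6 {V0 V1 V2 : Type*}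
    [NormedAddCommGroup V0] [InnerProductSpace ℝ V0]
    [NormedAddCommGroup V1] [InnerProductSpace ℝ V1]
    [NormedAddCommGroup V2] [InnerProductSpace ℝ V2]
    [FiniteDimensional ℝ V1] [FiniteDimensional ℝ V2]
    (div : V1 →ₗ[ℝ] V2) (tgrad : V2 →ₗ[ℝ] V1) (tcurl : V1 →ₗ[ℝ] V0)
    (htg : ∀ (q : V2) (v : V1), ⟪tgrad q, v⟫ = -⟪q, div v⟫)
    (htc0 : ∀ q : V2, tcurl (tgrad q) = 0)
    (s : V1 → V1 → V1) (ν : ℝ)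
    (u u' : ℝ → V1) (p : ℝ → V2)
    (hu : ∀ t, HasDerivAt u (u' t) t)
    (hmom : ∀ (t : ℝ) (v : V1), ⟪u' t, v⟫ + ⟪u t, s (u t) v⟫ + ⟪tgrad (p t), v⟫
        + ν * ⟪tcurl (u t), tcurl v⟫ = 0)
    (hpres : ∀ (t : ℝ) (q : V2),
        ⟪u t, s (u t) (tgrad q)⟫ + ⟪tgrad (p t), tgrad q⟫ = 0) :
    (∀ t, div (u' t) = 0) ∧ (div (u 0) = 0 → ∀ t, div (u t) = 0) := by
  have key : ∀ t, div (u' t) = 0 := by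
    intro t
    have h : ∀ q : V2, ⟪div (u' t), q⟫ = 0 := by
      intro q
      have hm := hmom t (tgrad q)
      have hp := hpres t q
      rw [htc0 q, inner_zero_right, mul_zero, add_zero] at hm
      have h1 : ⟪u' t, tgrad q⟫ = 0 := by linarith
      have h2 := htg q (u' t)
      rw [real_inner_comm] at h1
      rw [h1] at h2
      have := h2.symm
      rw [real_inner_comm] at this
      linarith [this]
    exact inner_self_eq_zero.mp (h (div (u' t)))
  refine ⟨key, fun h0 t => ?_⟩
  have hconst : ∀ t : ℝ, div (u t) = div (u 0) := by
    intro t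
    have : ∀ s : ℝ, HasDerivAt (fun r => div (u r)) 0 s := by
      intro s
      have := (div.toContinuousLinearMap.hasFDerivAt.comp_hasDerivAt s (hu s))
      simpa [key s, Function.comp_def] using this
    have := is_const_of_deriv_eq_zero (f := fun r => div (u r))
      (fun s => (this s).differentiableAt) (fun s => (this s).deriv) t 0
    exact this
  rw [hconst t, h0]
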